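/- Let 0 < p < 1 and let d_x, d_y, d_{xy} > 0 satisfy the three p-triangle inequalities (d_x^p ≤ d_y^p + d_{xy}^p, etc.). For a, b ∈ ℝ define C := |a+b|^p (d_x^p + d_y^p - d_{xy}^p)/2 + |a|^p (d_{xy}^p + d_x^p - d_y^p)/2 + |b|^p (d_{xy}^p + d_y^p - d_x^p)/2. Then C ≤ min{|a|^p d_x^p + |b|^p d_y^p, |a+b|^p d_x^p + |b|^p d_{xy}^p, |a+b|^p d_y^p + |a|^p d_{xy}^p}, with equality if and only if one of the following holds: d_x^p + d_y^p = d_{xy}^p, d_x^p + d_{xy}^p = d_y^p, d_y^p + d_{xy}^p = d_x^p, ab = 0, or a = -b. -/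
import Mathlib

lemma strict_add_rpow {p : ℝ} (hp0 : 0 < p) (hp1 : p < 1) {x y : ℝ}
    (hx : 0 < x) (hy : 0 < y) : (x + y) ^ p < x ^ p + y ^ p := by
  have hs : 0 < x + y := by linarith
  have h1 : x / (x + y) < (x / (x + y)) ^ p := by
    have := Real.rpow_lt_rpow_of_exponent_gt (x := x / (x + y)) (by positivity)
      (by rw [div_lt_one hs]; linarith) hp1
    rwa [Real.rpow_one] at this
  have h2 : y / (x + y) < (y / (x + y)) ^ p := by
    have := Real.rpow_lt_rpow_of_exponent_gt (x := y / (x + y)) (by positivity)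
      (by rw [div_lt_one hs]; linarith) hp1
    rwa [Real.rpow_one] at this
  have hx' : (x + y) ^ p * (x / (x + y)) ^ p = x ^ p := by
    rw [← Real.mul_rpow hs.le (by positivity), mul_comm, div_mul_cancel₀ _ hs.ne']
  have hy' : (x + y) ^ p * (y / (x + y)) ^ p = y ^ p := by
    rw [← Real.mul_rpow hs.le (by positivity), mul_comm, div_mul_cancel₀ _ hs.ne']
  calc (x + y) ^ p = (x + y) ^ p * (x / (x + y) + y / (x + y)) := by
        field_simp
    _ < (x + y) ^ p * ((x / (x + y)) ^ p + (y / (x + y)) ^ p) := by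
        apply mul_lt_mul_of_pos_left (by linarith) (Real.rpow_pos_of_pos hs p)
    _ = x ^ p + y ^ p := by rw [mul_add, hx', hy']

lemma abs_rpow_subadd {p : ℝ} (hp0 : 0 < p) (hp1 : p < 1) (s t : ℝ) :
    |s + t| ^ p ≤ |s| ^ p + |t| ^ p ∧
      (|s + t| ^ p = |s| ^ p + |t| ^ p ↔ s * t = 0) := by
  rcases eq_or_ne s 0 with rfl | hs
  · simp [Real.zero_rpow hp0.ne']
  rcases eq_or_ne t 0 with rfl | ht
  · simp [Real.zero_rpow hp0.ne']
  have hlt : |s + t| ^ p < |s| ^ p + |t| ^ p :=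
    calc |s + t| ^ p ≤ (|s| + |t|) ^ p :=
          Real.rpow_le_rpow (abs_nonneg _) (abs_add_le s t) hp0.le
      _ < |s| ^ p + |t| ^ p :=
          strict_add_rpow hp0 hp1 (abs_pos.mpr hs) (abs_pos.mpr ht)
  refine ⟨hlt.le, ?_⟩
  constructor
  · intro h; exact absurd h hlt.ne
  · intro h; rcases mul_eq_zero.mp h with h | h <;> [exact absurd h hs; exact absurd h ht]

/-- the quantity `C` is a lower bound for the three-term minimum,
with equality iff one of the degeneracy conditions holds. -/
theorem stmt_6 (p : ℝ) (hp0 : 0 < p) (hp1 : p < 1)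
    (dx dy dxy : ℝ) (hdx : 0 < dx) (hdy : 0 < dy) (hdxy : 0 < dxy)
    (t1 : dx ^ p ≤ dy ^ p + dxy ^ p) (t2 : dy ^ p ≤ dx ^ p + dxy ^ p)
    (t3 : dxy ^ p ≤ dx ^ p + dy ^ p)
    (a b : ℝ) (C : ℝ)
    (hC : C = |a + b| ^ p * ((dx ^ p + dy ^ p - dxy ^ p) / 2)
        + |a| ^ p * ((dxy ^ p + dx ^ p - dy ^ p) / 2)
        + |b| ^ p * ((dxy ^ p + dy ^ p - dx ^ p) / 2)) :
    C ≤ min (min (|a| ^ p * dx ^ p + |b| ^ p * dy ^ p)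
          (|a + b| ^ p * dx ^ p + |b| ^ p * dxy ^ p))
        (|a + b| ^ p * dy ^ p + |a| ^ p * dxy ^ p) ∧
    (C = min (min (|a| ^ p * dx ^ p + |b| ^ p * dy ^ p)
          (|a + b| ^ p * dx ^ p + |b| ^ p * dxy ^ p))
        (|a + b| ^ p * dy ^ p + |a| ^ p * dxy ^ p) ↔
      (dx ^ p + dy ^ p = dxy ^ p ∨ dx ^ p + dxy ^ p = dy ^ p ∨
        dy ^ p + dxy ^ p = dx ^ p ∨ a * b = 0 ∨ a = -b)) := by
  obtain ⟨k1le, k1eq⟩ := abs_rpow_subadd hp0 hp1 a b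
  obtain ⟨k2le, k2eq⟩ := abs_rpow_subadd hp0 hp1 (a + b) (-b)
  obtain ⟨k3le, k3eq⟩ := abs_rpow_subadd hp0 hp1 (a + b) (-a)
  rw [show a + b + -b = a by ring, abs_neg] at k2le k2eq
  rw [show a + b + -a = b by ring, abs_neg] at k3le k3eq
  have e1 : |a| ^ p * dx ^ p + |b| ^ p * dy ^ p - C
      = (|a| ^ p + |b| ^ p - |a + b| ^ p) * ((dx ^ p + dy ^ p - dxy ^ p) / 2) := by
    rw [hC]; ring
  have e2 : |a + b| ^ p * dx ^ p + |b| ^ p * dxy ^ p - C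
      = (|a + b| ^ p + |b| ^ p - |a| ^ p) * ((dx ^ p + dxy ^ p - dy ^ p) / 2) := by
    rw [hC]; ring
  have e3 : |a + b| ^ p * dy ^ p + |a| ^ p * dxy ^ p - C
      = (|a + b| ^ p + |a| ^ p - |b| ^ p) * ((dy ^ p + dxy ^ p - dx ^ p) / 2) := by
    rw [hC]; ring
  have hle1 : C ≤ |a| ^ p * dx ^ p + |b| ^ p * dy ^ p := by
    nlinarith [mul_nonneg (by linarith : (0:ℝ) ≤ |a| ^ p + |b| ^ p - |a + b| ^ p)
      (by linarith : (0:ℝ) ≤ (dx ^ p + dy ^ p - dxy ^ p) / 2)]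
  have hle2 : C ≤ |a + b| ^ p * dx ^ p + |b| ^ p * dxy ^ p := by
    nlinarith [mul_nonneg (by linarith : (0:ℝ) ≤ |a + b| ^ p + |b| ^ p - |a| ^ p)
      (by linarith : (0:ℝ) ≤ (dx ^ p + dxy ^ p - dy ^ p) / 2)]
  have hle3 : C ≤ |a + b| ^ p * dy ^ p + |a| ^ p * dxy ^ p := by
    nlinarith [mul_nonneg (by linarith : (0:ℝ) ≤ |a + b| ^ p + |a| ^ p - |b| ^ p)
      (by linarith : (0:ℝ) ≤ (dy ^ p + dxy ^ p - dx ^ p) / 2)]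
  have hmin : C ≤ min (min (|a| ^ p * dx ^ p + |b| ^ p * dy ^ p)
      (|a + b| ^ p * dx ^ p + |b| ^ p * dxy ^ p))
      (|a + b| ^ p * dy ^ p + |a| ^ p * dxy ^ p) := le_min (le_min hle1 hle2) hle3
  refine ⟨hmin, ?_, ?_⟩
  · -- forward direction
    intro h
    have hcase : C = |a| ^ p * dx ^ p + |b| ^ p * dy ^ p ∨
        C = |a + b| ^ p * dx ^ p + |b| ^ p * dxy ^ p ∨
        C = |a + b| ^ p * dy ^ p + |a| ^ p * dxy ^ p := by
      rcases min_cases (min (|a| ^ p * dx ^ p + |b| ^ p * dy ^ p)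
          (|a + b| ^ p * dx ^ p + |b| ^ p * dxy ^ p))
          (|a + b| ^ p * dy ^ p + |a| ^ p * dxy ^ p) with ⟨h3, _⟩ | ⟨h3, _⟩
      · rcases min_cases (|a| ^ p * dx ^ p + |b| ^ p * dy ^ p)
            (|a + b| ^ p * dx ^ p + |b| ^ p * dxy ^ p) with ⟨h4, _⟩ | ⟨h4, _⟩
        · left; rw [h, h3, h4]
        · right; left; rw [h, h3, h4]
      · right; right; rw [h, h3]
    rcases hcase with hc | hc | hc
    · have : (|a| ^ p + |b| ^ p - |a + b| ^ p) * ((dx ^ p + dy ^ p - dxy ^ p) / 2) = 0 := by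
        rw [← e1, hc]; ring
      rcases mul_eq_zero.mp this with h0 | h0
      · exact Or.inr (Or.inr (Or.inr (Or.inl (k1eq.mp (by linarith)))))
      · exact Or.inl (by linarith)
    · have : (|a + b| ^ p + |b| ^ p - |a| ^ p) * ((dx ^ p + dxy ^ p - dy ^ p) / 2) = 0 := by
        rw [← e2, hc]; ring
      rcases mul_eq_zero.mp this with h0 | h0
      · have := k2eq.mp (by linarith)
        rcases mul_eq_zero.mp this with h1 | h1
        · exact Or.inr (Or.inr (Or.inr (Or.inr (by linarith))))
        · exact Or.inr (Or.inr (Or.inr (Or.inl (by rw [show b = 0 by linarith]; ring))))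
      · exact Or.inr (Or.inl (by linarith))
    · have : (|a + b| ^ p + |a| ^ p - |b| ^ p) * ((dy ^ p + dxy ^ p - dx ^ p) / 2) = 0 := by
        rw [← e3, hc]; ring
      rcases mul_eq_zero.mp this with h0 | h0
      · have := k3eq.mp (by linarith)
        rcases mul_eq_zero.mp this with h1 | h1
        · exact Or.inr (Or.inr (Or.inr (Or.inr (by linarith))))
        · exact Or.inr (Or.inr (Or.inr (Or.inl (by rw [show a = 0 by linarith]; ring))))
      · exact Or.inr (Or.inr (Or.inl (by linarith)))
  · -- reverse direction
    intro h
    refine le_antisymm hmin ?_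
    have m1 : min (min (|a| ^ p * dx ^ p + |b| ^ p * dy ^ p)
        (|a + b| ^ p * dx ^ p + |b| ^ p * dxy ^ p))
        (|a + b| ^ p * dy ^ p + |a| ^ p * dxy ^ p)
        ≤ |a| ^ p * dx ^ p + |b| ^ p * dy ^ p :=
      le_trans (min_le_left _ _) (min_le_left _ _)
    have m2 : min (min (|a| ^ p * dx ^ p + |b| ^ p * dy ^ p)
        (|a + b| ^ p * dx ^ p + |b| ^ p * dxy ^ p))
        (|a + b| ^ p * dy ^ p + |a| ^ p * dxy ^ p)
        ≤ |a + b| ^ p * dx ^ p + |b| ^ p * dxy ^ p :=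
      le_trans (min_le_left _ _) (min_le_right _ _)
    have m3 := min_le_right (min (|a| ^ p * dx ^ p + |b| ^ p * dy ^ p)
        (|a + b| ^ p * dx ^ p + |b| ^ p * dxy ^ p))
        (|a + b| ^ p * dy ^ p + |a| ^ p * dxy ^ p)
    rcases h with h | h | h | h | h
    · have : |a| ^ p * dx ^ p + |b| ^ p * dy ^ p - C = 0 := by rw [e1, h]; ring
      linarith
    · have : |a + b| ^ p * dx ^ p + |b| ^ p * dxy ^ p - C = 0 := by rw [e2, h]; ring
      linarith
    · have : |a + b| ^ p * dy ^ p + |a| ^ p * dxy ^ p - C = 0 := by rw [e3, h]; ring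
      linarith
    · have hk := k1eq.mpr h
      have : |a| ^ p * dx ^ p + |b| ^ p * dy ^ p - C = 0 := by rw [e1, hk]; ring
      linarith
    · have hk : |a| ^ p = |a + b| ^ p + |b| ^ p := k2eq.mpr (by rw [h]; ring)
      have : |a + b| ^ p * dx ^ p + |b| ^ p * dxy ^ p - C = 0 := by rw [e2, hk]; ring
      linarith
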